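/- Let Z*, Δ ∈ ℝ^{n×N}, and suppose that for every k = 1, …, n the support of the k-th row of Δ is contained in the support of the k-th row of Z*. Then (1/2) ‖Δ Z*ᵀ − Z* Δᵀ‖_F ≤ sqrt( Σ_{k=1}^n ‖D_k Z* D̃_k Δ_{(k,·)}ᵀ‖₂² ) ≤ ( max_{1≤k≤n} ‖D_k Z* D̃_k‖₂ ) · ‖Δ‖_F, where D_k is the n×n diagonal matrix with ones on the diagonal except a zero at entry (k,k), and D̃_k is the N×N diagonal matrix with ones at entries (i,i) for i in the support of the k-th row of Z* and zeros elsewhere. -/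

import Mathlib

open scoped BigOperators
open Matrix

/-- Frobenius norm of a real matrix. -/
noncomputable def frobNorm {m n : ℕ} (A : Matrix (Fin m) (Fin n) ℝ) : ℝ :=
  Real.sqrt (∑ i, ∑ j, (A i j) ^ 2)

/-- Spectral (largest singular value / ℓ2-operator) norm of a real matrix. -/
noncomputable def specNorm {m n : ℕ} (A : Matrix (Fin m) (Fin n) ℝ) : ℝ :=
  ‖LinearMap.toContinuousLinearMap (Matrix.toEuclideanLin A)‖

/-- Euclidean (ℓ2) norm of a vector. -/
noncomputable def vecNorm {n : ℕ} (v : Fin n → ℝ) : ℝ :=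
  Real.sqrt (∑ i, v i ^ 2)

/-- β(z): the smallest nonzero magnitude among the entries of `z`
(defined as `sInf` of the set of nonzero magnitudes; `0` if `z = 0`). -/
noncomputable def beta {n : ℕ} (z : Fin n → ℝ) : ℝ :=
  sInf {r : ℝ | ∃ i, z i ≠ 0 ∧ r = |z i|}

/-- `z` is an output of the hard-thresholding operator `H_s` applied to `y`:
there is a set `T` of `min s n` indices carrying largest-magnitude entries of `y`,
such that `z` agrees with `y` on `T` and vanishes off `T`. -/
def IsHardThreshold {n : ℕ} (s : ℕ) (y z : Fin n → ℝ) : Prop :=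
  ∃ T : Finset (Fin n), T.card = min s n ∧ (∀ i ∈ T, z i = y i) ∧ (∀ i ∉ T, z i = 0) ∧
    ∀ i ∈ T, ∀ j ∉ T, |y j| ≤ |y i|

/-- `A = U * S * Vᵀ` is a full singular value decomposition of `A`:
`U, V` orthogonal and `S` diagonal with nonnegative entries. -/
def IsFullSVD {n : ℕ} (A U S V : Matrix (Fin n) (Fin n) ℝ) : Prop :=
  Uᵀ * U = 1 ∧ Vᵀ * V = 1 ∧ (∀ i j, i ≠ j → S i j = 0) ∧ (∀ i, 0 ≤ S i i) ∧ A = U * S * Vᵀ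

/-- `W = V * Uᵀ` for some full SVD `A = U * S * Vᵀ`. -/
def IsPolarFromSVD {n : ℕ} (A W : Matrix (Fin n) (Fin n) ℝ) : Prop :=
  ∃ U S V, IsFullSVD A U S V ∧ W = V * Uᵀ

/-- `D_k`: the n×n diagonal matrix of ones with a zero at entry (k,k). -/
noncomputable def Dmat {n : ℕ} (k : Fin n) : Matrix (Fin n) (Fin n) ℝ :=
  Matrix.diagonal (fun i => if i = k then 0 else 1)

-- `D̃_k`: the N×N diagonal matrix with ones at the support of the k-th row of `Zs`.
open Classical in
noncomputable def Dtil {n N : ℕ} (Zs : Matrix (Fin n) (Fin N) ℝ) (k : Fin n) :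
    Matrix (Fin N) (Fin N) ℝ :=
  Matrix.diagonal (fun i => if Zs k i ≠ 0 then 1 else 0)

/-- `q = max_{1 ≤ k ≤ n} ‖D_k Z* D̃_k‖₂`. -/
noncomputable def qZero {n N : ℕ} (Zs : Matrix (Fin n) (Fin N) ℝ) : ℝ :=
  ⨆ k, specNorm (Dmat k * Zs * Dtil Zs k)

/-- Smallest singular value of an n×N matrix: `min_{‖x‖=1, x ∈ ℝⁿ} ‖Aᵀ x‖`. -/
noncomputable def sigmaMin {n N : ℕ} (A : Matrix (Fin n) (Fin N) ℝ) : ℝ :=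
  sInf {r : ℝ | ∃ x : EuclideanSpace ℝ (Fin n), ‖x‖ = 1 ∧ r = ‖Matrix.toEuclideanLin Aᵀ x‖}

/-- Condition number κ(A): ratio of largest to smallest singular value. -/
noncomputable def condNumber {n N : ℕ} (A : Matrix (Fin n) (Fin N) ℝ) : ℝ :=
  specNorm A / sigmaMin A

/-- `q = κ⁴(Z*) · max_{1 ≤ k ≤ n} ‖D_k Z* Z*ᵀ Z* D̃_k‖₂`. -/
noncomputable def qGen {n N : ℕ} (Zs : Matrix (Fin n) (Fin N) ℝ) : ℝ :=
  condNumber Zs ^ 4 * ⨆ k, specNorm (Dmat k * Zs * Zsᵀ * Zs * Dtil Zs k)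

/-- the key chain of inequalities bounding
`(1/2)‖Δ Z*ᵀ − Z* Δᵀ‖_F` when row supports of `Δ` lie in those of `Z*`. -/
lemma vecNorm_eq_norm {n : ℕ} (v : Fin n → ℝ) :
    vecNorm v = ‖(WithLp.equiv 2 (Fin n → ℝ)).symm v‖ := by
  rw [EuclideanSpace.norm_eq]
  simp [vecNorm, sq_abs]

lemma vecNorm_nonneg {n : ℕ} (v : Fin n → ℝ) : 0 ≤ vecNorm v := Real.sqrt_nonneg _

lemma vecNorm_sq {n : ℕ} (v : Fin n → ℝ) : vecNorm v ^ 2 = ∑ i, v i ^ 2 :=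
  Real.sq_sqrt (Finset.sum_nonneg fun _ _ => sq_nonneg _)

lemma vecNorm_mulVec_le {m n : ℕ} (A : Matrix (Fin m) (Fin n) ℝ) (v : Fin n → ℝ) :
    vecNorm (A.mulVec v) ≤ specNorm A * vecNorm v := by
  have h := (LinearMap.toContinuousLinearMap (Matrix.toEuclideanLin A)).le_opNorm
      ((WithLp.equiv 2 (Fin n → ℝ)).symm v)
  simpa [vecNorm_eq_norm, specNorm, Matrix.toEuclideanLin_apply_piLp_toLp] using h

theorem stmt11
    {n N : ℕ} (Zs Δ : Matrix (Fin n) (Fin N) ℝ)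
    (hsupp : ∀ k i, Δ k i ≠ 0 → Zs k i ≠ 0) :
    (1/2) * frobNorm (Δ * Zsᵀ - Zs * Δᵀ) ≤
      Real.sqrt (∑ k, vecNorm ((Dmat k * Zs * Dtil Zs k).mulVec (fun i => Δ k i)) ^ 2) ∧
    Real.sqrt (∑ k, vecNorm ((Dmat k * Zs * Dtil Zs k).mulVec (fun i => Δ k i)) ^ 2) ≤
      (⨆ k, specNorm (Dmat k * Zs * Dtil Zs k)) * frobNorm Δ := by
  classical
  set W : Fin n → Fin n → ℝ :=
    fun k => (Dmat k * Zs * Dtil Zs k).mulVec (fun i => Δ k i) with hWdef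
  have hW : ∀ k j, W k j = if j = k then 0 else ∑ i, Zs j i * Δ k i := by
    intro k j
    have hentry : ∀ i, (Dmat k * Zs * Dtil Zs k) j i =
        (if j = k then 0 else 1) * Zs j i * (if Zs k i ≠ 0 then 1 else 0) := by
      intro i
      rw [Dmat, Dtil, Matrix.mul_diagonal, Matrix.diagonal_mul]
    simp only [hWdef, Matrix.mulVec, dotProduct, hentry]
    by_cases hjk : j = k
    · simp [hjk]
    · simp only [hjk, if_false, one_mul]
      refine Finset.sum_congr rfl fun i _ => ?_
      by_cases hΔ : Δ k i = 0
      · simp [hΔ]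
      · simp [hsupp k i hΔ]
  set T : ℝ := ∑ k, vecNorm (W k) ^ 2 with hTdef
  have hT : T = ∑ k, ∑ j, W k j ^ 2 := by
    simp [hTdef, vecNorm_sq]
  have hT0 : 0 ≤ T := Finset.sum_nonneg fun _ _ => sq_nonneg _
  constructor
  · -- first inequality
    have hpt : ∀ k j, ((Δ * Zsᵀ - Zs * Δᵀ) k j) ^ 2 ≤ 2 * W k j ^ 2 + 2 * W j k ^ 2 := by
      intro k j
      have hM : (Δ * Zsᵀ - Zs * Δᵀ) k j =
          (∑ i, Δ k i * Zs j i) - (∑ i, Zs k i * Δ j i) := by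
        simp [Matrix.sub_apply, Matrix.mul_apply, Matrix.transpose_apply]
      by_cases hjk : j = k
      · subst hjk
        have : (Δ * Zsᵀ - Zs * Δᵀ) j j = 0 := by
          rw [hM]; rw [Finset.sum_congr rfl fun i _ => mul_comm (Δ j i) (Zs j i)]; ring
        rw [this]
        nlinarith [sq_nonneg (W j j)]
      · have hkj : ¬ (k = j) := fun h => hjk h.symm
        rw [hW k j, hW j k, if_neg hjk, if_neg hkj, hM]
        have h1 : (∑ i, Δ k i * Zs j i) = ∑ i, Zs j i * Δ k i :=
          Finset.sum_congr rfl fun i _ => mul_comm _ _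
        rw [h1]
        nlinarith [sq_nonneg ((∑ i, Zs j i * Δ k i) + (∑ i, Zs k i * Δ j i))]
    have hS : (∑ k, ∑ j, ((Δ * Zsᵀ - Zs * Δᵀ) k j) ^ 2) ≤ 4 * T := by
      calc (∑ k, ∑ j, ((Δ * Zsᵀ - Zs * Δᵀ) k j) ^ 2)
          ≤ ∑ k, ∑ j, (2 * W k j ^ 2 + 2 * W j k ^ 2) :=
            Finset.sum_le_sum fun k _ => Finset.sum_le_sum fun j _ => hpt k j
        _ = 2 * (∑ k, ∑ j, W k j ^ 2) + 2 * (∑ k, ∑ j, W j k ^ 2) := by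
            simp [Finset.sum_add_distrib, Finset.mul_sum]
        _ = 4 * T := by rw [Finset.sum_comm (f := fun k j => W j k ^ 2), hT]; ring
    have hsq : Real.sqrt (∑ k, ∑ j, ((Δ * Zsᵀ - Zs * Δᵀ) k j) ^ 2) ≤ Real.sqrt (4 * T) :=
      Real.sqrt_le_sqrt hS
    have h4 : Real.sqrt (4 * T) = 2 * Real.sqrt T := by
      rw [show (4:ℝ) = 2 ^ 2 by norm_num, Real.sqrt_mul (by positivity),
        Real.sqrt_sq (by norm_num : (0:ℝ) ≤ 2)]
    rw [frobNorm]
    calc (1/2) * Real.sqrt (∑ k, ∑ j, ((Δ * Zsᵀ - Zs * Δᵀ) k j) ^ 2)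
        ≤ (1/2) * (2 * Real.sqrt T) := by
          rw [← h4]; linarith [hsq]
      _ = Real.sqrt T := by ring
  · -- second inequality
    rcases Nat.eq_zero_or_pos n with hn | hn
    · subst hn
      simp [hTdef, Real.iSup_of_isEmpty]
    · haveI : Nonempty (Fin n) := ⟨⟨0, hn⟩⟩
      set q : ℝ := ⨆ k, specNorm (Dmat k * Zs * Dtil Zs k) with hqdef
      have hbdd : BddAbove (Set.range fun k => specNorm (Dmat k * Zs * Dtil Zs k)) :=
        (Set.finite_range _).bddAbove
      have hqk : ∀ k, specNorm (Dmat k * Zs * Dtil Zs k) ≤ q := fun k => le_ciSup hbdd k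
      have hq0 : 0 ≤ q := le_trans (norm_nonneg _) (hqk (Classical.arbitrary _))
      have hF0 : 0 ≤ frobNorm Δ := Real.sqrt_nonneg _
      have hTle : T ≤ q ^ 2 * frobNorm Δ ^ 2 := by
        have step : ∀ k, vecNorm (W k) ^ 2 ≤ q ^ 2 * vecNorm (fun i => Δ k i) ^ 2 := by
          intro k
          have h1 : vecNorm (W k) ≤ q * vecNorm (fun i => Δ k i) :=
            le_trans (vecNorm_mulVec_le _ _)
              (mul_le_mul_of_nonneg_right (hqk k) (vecNorm_nonneg _))
          have := pow_le_pow_left₀ (vecNorm_nonneg (W k)) h1 2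
          calc vecNorm (W k) ^ 2 ≤ (q * vecNorm (fun i => Δ k i)) ^ 2 := this
            _ = q ^ 2 * vecNorm (fun i => Δ k i) ^ 2 := by ring
        calc T ≤ ∑ k, q ^ 2 * vecNorm (fun i => Δ k i) ^ 2 :=
              Finset.sum_le_sum fun k _ => step k
          _ = q ^ 2 * ∑ k, ∑ i, Δ k i ^ 2 := by
              rw [← Finset.mul_sum]
              simp [vecNorm_sq]
          _ = q ^ 2 * frobNorm Δ ^ 2 := by
              rw [frobNorm, Real.sq_sqrt (by positivity)]
      calc Real.sqrt T ≤ Real.sqrt (q ^ 2 * frobNorm Δ ^ 2) := Real.sqrt_le_sqrt hTle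
        _ = q * frobNorm Δ := by
            rw [Real.sqrt_mul (sq_nonneg q), Real.sqrt_sq hq0, Real.sqrt_sq hF0]
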